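/- Let 0 < A ≤ B. For each positive integer d let x_d be the unique number in (0, 1/4) with D_d(x_d) = A/B, and set ω_d = (1/(πd))·ln(1 + A/B). Then lim_{d→∞} (x_d - ω_d) / ( [ln(1 + A/B)]² / (6π(1 + B/A)d²) ) = 1. -/

import Mathlib

set_option maxHeartbeats 1000000
open Real Set Filter

noncomputable def D (d : ℕ) (x : ℝ) : ℝ :=
  (1 - Real.cos (π * x) + Real.sin (π * x) + Real.sin (π * x) / (π * x)) ^ d
    - (Real.sin (π * x) / (π * x)) ^ d


lemma sinc_taylor {t : ℝ} (ht : 0 < t) (ht1 : t ≤ 1) :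
    |Real.sin t / t - (1 - t ^ 2 / 6)| ≤ t ^ 3 * (5 / 96) := by
  have hs := Real.sin_bound (x := t) (by rw [abs_of_pos ht]; exact ht1)
  rw [abs_of_pos ht] at hs
  have he : Real.sin t / t - (1 - t ^ 2 / 6) = (Real.sin t - (t - t ^ 3 / 6)) / t := by
    field_simp
  rw [he, abs_div, abs_of_pos ht, div_le_iff₀ ht]
  calc |Real.sin t - (t - t ^ 3 / 6)| ≤ t ^ 4 * (5 / 96) := hs.trans (by nlinarith [mul_le_mul_of_nonneg_left ht1 (pow_nonneg ht.le 4)])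
    _ = t ^ 3 * (5 / 96) * t := by ring

lemma log_one_add_sq {u : ℝ} (h0 : 0 ≤ u) (h1 : u ≤ 2/3) :
    |Real.log (1 + u) - u + u ^ 2 / 2| ≤ 3 * u ^ 3 := by
  have h := Real.abs_log_sub_add_sum_range_le (x := -u) (by rw [abs_neg, abs_of_nonneg h0]; linarith) 2
  simp only [Finset.sum_range_succ, Finset.sum_range_zero] at h
  rw [abs_neg, abs_of_nonneg h0] at h
  have e : Real.log (1 + u) - u + u ^ 2 / 2
      = 0 + (-u) ^ (0 + 1) / ((0:ℕ) + 1) + (-u) ^ (1 + 1) / ((1:ℕ) + 1) + Real.log (1 - -u) := by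
    push_cast; ring_nf
  rw [e]
  refine h.trans ?_
  rw [show (2+1)=3 from rfl, div_le_iff₀ (by linarith)]
  nlinarith [mul_nonneg (pow_nonneg h0 3) (by linarith : (0:ℝ) ≤ 2 - 3*u)]

lemma log_one_add_lin {w : ℝ} (h1 : |w| ≤ 1/4) :
    |Real.log (1 + w) - w| ≤ 2 * w ^ 2 := by
  have habs : |(-w)| < 1 := by rw [abs_neg]; linarith [abs_nonneg w]
  have h := Real.abs_log_sub_add_sum_range_le habs 1
  simp only [Finset.sum_range_succ, Finset.sum_range_zero] at h
  have e : Real.log (1 + w) - w = 0 + (-w) ^ (0 + 1) / ((0:ℕ) + 1) + Real.log (1 - -w) := by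
    push_cast; ring_nf
  rw [e]
  refine h.trans ?_
  rw [abs_neg, div_le_iff₀ (by rw [abs_neg] at habs; linarith)]
  have h2 : |w| ^ (1+1) = w ^ 2 := sq_abs w
  rw [h2]
  nlinarith [abs_nonneg w, sq_nonneg w]

lemma logG_taylor {t : ℝ} (ht : 0 < t) (ht2 : t ≤ 1/2) :
    |Real.log (Real.sin t / t) + t ^ 2 / 6| ≤ 2 * t ^ 3 := by
  set w := Real.sin t / t - 1 with hw_def
  clear_value w
  have hw : |w + t ^ 2 / 6| ≤ t ^ 3 * (5/96) := by
    have := sinc_taylor ht (by linarith)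
    have e : Real.sin t / t - (1 - t ^ 2 / 6) = w + t ^ 2 / 6 := by rw [hw_def]; ring
    rwa [e] at this
  have ht3 : t ^ 3 ≤ t ^ 2 * (1/2) := by nlinarith [sq_nonneg t]
  have hwabs : |w| ≤ t ^ 2 / 5 := by
    have := abs_sub_abs_le_abs_sub (w + t^2/6) (t^2/6)
    rw [abs_of_nonneg (by positivity : (0:ℝ) ≤ t^2/6)] at this
    have h2 : |w| ≤ |w + t^2/6| + t^2/6 := by
      have := abs_add_le (w + t^2/6) (-(t^2/6))
      simp only [add_neg_cancel_right, abs_neg, abs_of_nonneg (by positivity : (0:ℝ) ≤ t^2/6)] at this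
      linarith
    nlinarith [sq_nonneg t]
  have hlog : |Real.log (1 + w) - w| ≤ 2 * w ^ 2 := by
    apply log_one_add_lin
    refine hwabs.trans ?_
    nlinarith
  have he : Real.sin t / t = 1 + w := by rw [hw_def]; ring
  rw [he]
  have key : Real.log (1 + w) + t ^ 2 / 6 = (Real.log (1 + w) - w) + (w + t ^ 2 / 6) := by ring
  rw [key]
  refine (abs_add_le _ _).trans ?_
  have hw2 : w ^ 2 ≤ (t^2/5)^2 := by
    calc w ^ 2 = |w| ^ 2 := (sq_abs w).symm
      _ ≤ (t^2/5)^2 := pow_le_pow_left₀ (abs_nonneg w) hwabs 2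
  have hw3 : w ^ 2 ≤ t ^ 3 / 50 := by nlinarith [pow_pos ht 3, pow_pos ht 2]
  linarith [pow_pos ht 3]

lemma logF_taylor {t : ℝ} (ht : 0 < t) (ht2 : t ≤ 1/2) :
    |Real.log (1 - Real.cos t + Real.sin t + Real.sin t / t) - t + t ^ 2 / 6| ≤ 8 * t ^ 3 := by
  have htabs : |t| ≤ 1 := by rw [abs_of_pos ht]; linarith
  have hc := Real.cos_bound htabs
  have hs := Real.sin_bound htabs
  rw [abs_of_pos ht] at hc hs
  have hsc := sinc_taylor ht (by linarith)
  set u := (1 - Real.cos t + Real.sin t + Real.sin t / t) - 1 with hu_def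
  clear_value u
  have he : 1 - Real.cos t + Real.sin t + Real.sin t / t = 1 + u := by rw [hu_def]; ring
  have hu : |u - t - t ^ 2 / 3| ≤ t ^ 3 / 3 := by
    have key : u - t - t ^ 2 / 3 =
        -(Real.cos t - (1 - t^2/2)) + (Real.sin t - (t - t^3/6)) + (Real.sin t / t - (1 - t^2/6)) - t^3/6 := by
      rw [hu_def]; ring
    rw [key]
    have h1 := abs_add_le (-(Real.cos t - (1 - t^2/2)) + (Real.sin t - (t - t^3/6))) ((Real.sin t / t - (1 - t^2/6)) + -(t^3/6))
    have h2 := abs_add_le (-(Real.cos t - (1 - t^2/2))) (Real.sin t - (t - t^3/6))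
    have h3 := abs_add_le (Real.sin t / t - (1 - t^2/6)) (-(t^3/6))
    rw [abs_neg] at h2 h3
    rw [abs_of_nonneg (by positivity : (0:ℝ) ≤ t^3/6)] at h3
    have e2 : -(Real.cos t - (1 - t^2/2)) + (Real.sin t - (t - t^3/6)) + ((Real.sin t / t - (1 - t^2/6)) + -(t^3/6)) = -(Real.cos t - (1 - t^2/2)) + (Real.sin t - (t - t^3/6)) + (Real.sin t / t - (1 - t^2/6)) - t^3/6 := by ring
    rw [e2] at h1
    have ht4 : t ^ 4 ≤ t ^ 3 * (1/2) := by nlinarith [pow_pos ht 3]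
    calc |(-(Real.cos t - (1 - t^2/2)) + (Real.sin t - (t - t^3/6)) + (Real.sin t / t - (1 - t^2/6)) - t^3/6)|
        ≤ |(-(Real.cos t - (1 - t^2/2)) + (Real.sin t - (t - t^3/6)))| + (|Real.sin t / t - (1 - t^2/6)| + t^3/6) := h1.trans (by linarith)
      _ ≤ t^4 * (5/96) + t^4 * (5/96) + (t^3 * (5/96) + t^3/6) := by nlinarith [mul_le_mul_of_nonneg_left ht2 (pow_nonneg ht.le 4)]
      _ ≤ t ^ 3 / 3 := by nlinarith [pow_pos ht 3]
  have hu_ub : u ≤ t * (5/4) := by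
    have := (abs_le.mp hu).2
    nlinarith [pow_pos ht 2, pow_pos ht 3, sq_nonneg t]
  have hu_lb : 0 ≤ u := by
    have h1 := (abs_le.mp hu).1
    have ht4 : t^3 ≤ t^2/2 := by nlinarith [sq_nonneg t]
    linarith [sq_nonneg t]
  have hlog : |Real.log (1 + u) - u + u ^ 2 / 2| ≤ 3 * u ^ 3 :=
    log_one_add_sq hu_lb (by nlinarith)
  have hu3 : u ^ 3 ≤ 2 * t ^ 3 := by
    calc u ^ 3 ≤ (t * (5/4)) ^ 3 := pow_le_pow_left₀ hu_lb hu_ub 3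
      _ = (125/64) * t ^ 3 := by ring
      _ ≤ 2 * t ^ 3 := by nlinarith [pow_pos ht 3]
  have hut : |u - t| ≤ t ^ 2 / 2 := by
    have h1 := (abs_le.mp hu).1
    have h2 := (abs_le.mp hu).2
    rw [abs_le]
    constructor <;> nlinarith [pow_pos ht 2, pow_pos ht 3]
  rw [he]
  have key : Real.log (1 + u) - t + t ^ 2 / 6 =
      (Real.log (1 + u) - u + u ^ 2 / 2) + (u - t - t ^ 2 / 3) - (u - t) * (u + t) / 2 := by ring
  rw [key]
  have h1 := abs_add_le ((Real.log (1 + u) - u + u ^ 2 / 2) + (u - t - t ^ 2 / 3)) (-((u - t) * (u + t) / 2))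
  have h2 := abs_add_le (Real.log (1 + u) - u + u ^ 2 / 2) (u - t - t ^ 2 / 3)
  rw [abs_neg] at h1
  have e2 : (Real.log (1 + u) - u + u ^ 2 / 2) + (u - t - t ^ 2 / 3) + -((u - t) * (u + t) / 2) = (Real.log (1 + u) - u + u ^ 2 / 2) + (u - t - t ^ 2 / 3) - (u - t) * (u + t) / 2 := by ring
  rw [e2] at h1
  have h3 : |(u - t) * (u + t) / 2| ≤ (t^2/2) * (t * (9/4)) / 2 := by
    rw [abs_div, abs_mul, abs_of_nonneg (by norm_num : (0:ℝ) ≤ 2)]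
    have hupt : |u + t| ≤ t * (9/4) := by
      rw [abs_of_nonneg (by linarith)]; linarith
    apply div_le_div_of_nonneg_right ?_ (by norm_num)
    exact mul_le_mul hut hupt (abs_nonneg _) (by positivity)
  have h3' : |(u - t) * (u + t) / 2| ≤ (9/16) * t^3 :=
    h3.trans (le_of_eq (by ring))
  refine h1.trans ?_
  have := pow_pos ht 3
  linarith

lemma sin_pos' {t : ℝ} (ht : 0 < t) (ht1 : t ≤ 1) : 0 < Real.sin t :=
  Real.sin_pos_of_pos_of_lt_pi ht (lt_of_le_of_lt ht1 (by linarith [Real.pi_gt_three]))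

lemma F_pos {t : ℝ} (ht : 0 < t) (ht1 : t ≤ 1) :
    0 < 1 - Real.cos t + Real.sin t + Real.sin t / t := by
  have h1 := Real.cos_le_one t
  have h2 := sin_pos' ht ht1
  have h3 : 0 < Real.sin t / t := div_pos h2 ht
  linarith

lemma tcos_le_sin {t : ℝ} (ht : 0 < t) (ht1 : t ≤ 1) : t * Real.cos t ≤ Real.sin t := by
  have htabs : |t| ≤ 1 := by rw [abs_of_pos ht]; exact ht1
  have hc := (abs_le.mp (Real.cos_bound htabs)).2
  have hs := (abs_le.mp (Real.sin_bound htabs)).1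
  rw [abs_of_pos ht] at hc hs
  nlinarith [pow_pos ht 3, pow_pos ht 4, pow_pos ht 5]

-- derivative of D d at x ∈ (0, 1/4)
lemma hasDerivAt_D (d : ℕ) {x : ℝ} (hx0 : 0 < x) :
    HasDerivAt (D d)
      ((d : ℝ) * (1 - Real.cos (π * x) + Real.sin (π * x) + Real.sin (π * x) / (π * x)) ^ (d - 1) *
          ((Real.sin (π * x) * π + Real.cos (π * x) * π) +
            (Real.cos (π * x) * π * (π * x) - Real.sin (π * x) * π) / (π * x) ^ 2)
        - (d : ℝ) * (Real.sin (π * x) / (π * x)) ^ (d - 1) *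
            ((Real.cos (π * x) * π * (π * x) - Real.sin (π * x) * π) / (π * x) ^ 2)) x := by
  have hπx : π * x ≠ 0 := by positivity
  have hlin : HasDerivAt (fun y : ℝ => π * y) π x := by
    simpa using (hasDerivAt_id x).const_mul π
  have hsin : HasDerivAt (fun y : ℝ => Real.sin (π * y)) (Real.cos (π * x) * π) x :=
    (Real.hasDerivAt_sin (π * x)).comp x hlin
  have hcos : HasDerivAt (fun y : ℝ => Real.cos (π * y)) (-Real.sin (π * x) * π) x :=
    (Real.hasDerivAt_cos (π * x)).comp x hlin
  have hq : HasDerivAt (fun y : ℝ => Real.sin (π * y) / (π * y))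
      ((Real.cos (π * x) * π * (π * x) - Real.sin (π * x) * π) / (π * x) ^ 2) x := by
    exact hsin.div hlin hπx
  have hF : HasDerivAt (fun y : ℝ => 1 - Real.cos (π * y) + Real.sin (π * y) + Real.sin (π * y) / (π * y))
      ((Real.sin (π * x) * π + Real.cos (π * x) * π) +
        (Real.cos (π * x) * π * (π * x) - Real.sin (π * x) * π) / (π * x) ^ 2) x := by
    have h := (((hasDerivAt_const x (1:ℝ)).sub hcos).add hsin).add hq
    exact h.congr_deriv (by ring)
  exact (hF.pow d).sub (hq.pow d) |>.congr_deriv (by ring)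

lemma deriv_D_pos (d : ℕ) (hd : 1 ≤ d) {x : ℝ} (hx : x ∈ Ioo (0:ℝ) (1/4)) :
    0 < (d : ℝ) * (1 - Real.cos (π * x) + Real.sin (π * x) + Real.sin (π * x) / (π * x)) ^ (d - 1) *
          ((Real.sin (π * x) * π + Real.cos (π * x) * π) +
            (Real.cos (π * x) * π * (π * x) - Real.sin (π * x) * π) / (π * x) ^ 2)
        - (d : ℝ) * (Real.sin (π * x) / (π * x)) ^ (d - 1) *
            ((Real.cos (π * x) * π * (π * x) - Real.sin (π * x) * π) / (π * x) ^ 2) := by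
  obtain ⟨hx0, hx4⟩ := hx
  set t := π * x with ht_def
  have ht : 0 < t := by positivity
  have ht1 : t ≤ 1 := by
    rw [ht_def]
    nlinarith [Real.pi_lt_d2]
  clear_value t
  have hsin := sin_pos' ht ht1
  have hFpos := F_pos ht ht1
  have hGpos : 0 < Real.sin t / t := div_pos hsin ht
  have hdpos : (0:ℝ) < d := by exact_mod_cast hd
  -- G' ≤ 0
  have hG' : (Real.cos t * π * t - Real.sin t * π) / t ^ 2 ≤ 0 := by
    apply div_nonpos_of_nonpos_of_nonneg _ (sq_nonneg t)
    have := tcos_le_sin ht ht1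
    nlinarith [Real.pi_gt_three]
  -- F' > 0
  have hF' : 0 < (Real.sin t * π + Real.cos t * π) +
      (Real.cos t * π * t - Real.sin t * π) / t ^ 2 := by
    have hlb : -(t/2) * π ≤ (Real.cos t * π * t - Real.sin t * π) / t ^ 2 := by
      rw [le_div_iff₀ (by positivity : (0:ℝ) < t ^ 2)]
      have h1 : 1 - t^2/2 ≤ Real.cos t := Real.one_sub_sq_div_two_le_cos
      have h2 : Real.sin t ≤ t := Real.sin_le ht.le
      have key : 0 ≤ Real.cos t * t - Real.sin t + t^3/2 := by nlinarith
      nlinarith [mul_nonneg Real.pi_pos.le key]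
    have hs : t - t^3/4 < Real.sin t := (Real.sin_gt_sub_cube ht).trans' (by linarith [pow_pos ht 3])
    have hc : 1 - t^2/2 ≤ Real.cos t := Real.one_sub_sq_div_two_le_cos
    have htpi : t < π/4 := by
      rw [ht_def]; nlinarith [Real.pi_gt_three]
    nlinarith [Real.pi_gt_three, Real.pi_lt_d2, pow_pos ht 3, sq_nonneg t]
  have t1 : 0 < (d:ℝ) * (1 - Real.cos t + Real.sin t + Real.sin t / t) ^ (d-1) *
      ((Real.sin t * π + Real.cos t * π) + (Real.cos t * π * t - Real.sin t * π) / t ^ 2) := by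
    positivity
  have t2 : 0 ≤ -((d:ℝ) * (Real.sin t / t) ^ (d-1) * ((Real.cos t * π * t - Real.sin t * π) / t ^ 2)) := by
    have : (0:ℝ) ≤ (d:ℝ) * (Real.sin t / t) ^ (d-1) := by positivity
    nlinarith
  linarith

lemma D_strictMono (d : ℕ) (hd : 1 ≤ d) : StrictMonoOn (D d) (Ioo (0:ℝ) (1/4)) := by
  apply strictMonoOn_of_deriv_pos (convex_Ioo _ _)
  · intro y hy
    exact (hasDerivAt_D d hy.1).continuousAt.continuousWithinAt
  · intro y hy
    rw [interior_Ioo] at hy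
    rw [(hasDerivAt_D d hy.1).deriv]
    exact deriv_D_pos d hd hy

lemma exp_lim {u : ℕ → ℝ} {α : ℝ} (h : Tendsto (fun d : ℕ => (d:ℝ) * u d) atTop (nhds α)) :
    Tendsto (fun d : ℕ => (d:ℝ) * (Real.exp (u d) - 1)) atTop (nhds α) := by
  have hinv : Tendsto (fun d : ℕ => ((d:ℝ))⁻¹) atTop (nhds 0) :=
    tendsto_inv_atTop_zero.comp tendsto_natCast_atTop_atTop
  have hu0 : Tendsto u atTop (nhds 0) := by
    have h2 := h.mul hinv
    rw [mul_zero] at h2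
    apply h2.congr'
    filter_upwards [eventually_gt_atTop 0] with d hd
    have hd0 : (d:ℝ) ≠ 0 := Nat.cast_ne_zero.mpr hd.ne'
    field_simp
  have herr : Tendsto (fun d : ℕ => (d:ℝ) * (Real.exp (u d) - 1 - u d)) atTop (nhds 0) := by
    apply squeeze_zero_norm' (a := fun d : ℕ => |(d:ℝ) * u d| * |u d|)
    · have hsmall : ∀ᶠ d : ℕ in atTop, |u d| ≤ 1 := by
        have h3 : Tendsto (fun d => |u d|) atTop (nhds 0) := by
          simpa using hu0.abs
        filter_upwards [h3.eventually_lt_const (by norm_num : (0:ℝ) < 1)] with d hd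
        exact hd.le
      filter_upwards [hsmall] with d hd
      calc ‖(d:ℝ) * (Real.exp (u d) - 1 - u d)‖
          = (d:ℝ) * |Real.exp (u d) - 1 - u d| := by
            rw [Real.norm_eq_abs, abs_mul, Nat.abs_cast]
        _ ≤ (d:ℝ) * (u d ^ 2) :=
            mul_le_mul_of_nonneg_left (Real.abs_exp_sub_one_sub_id_le hd) (Nat.cast_nonneg d)
        _ = |(d:ℝ) * u d| * |u d| := by
            rw [abs_mul, Nat.abs_cast, mul_assoc, abs_mul_abs_self, sq]
    · have h4 := h.abs.mul hu0.abs
      simpa using h4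
  have h5 := h.add herr
  rw [add_zero] at h5
  apply h5.congr
  intro d; ring

noncomputable def Ft (t : ℝ) : ℝ := 1 - Real.cos t + Real.sin t + Real.sin t / t
noncomputable def Gt (t : ℝ) : ℝ := Real.sin t / t

lemma key_lim (r L c s : ℝ) (hr : 0 < r) (hL : L = Real.log (1+r))
    (hc : c = r * L ^ 2 / (6 * (1+r))) :
    Tendsto (fun d : ℕ => (d:ℝ) * (D d ((L + s*c/(d:ℝ)) / (π * (d:ℝ))) - r)) atTop
      (nhds ((1+r) * c * (s-1))) := by
  have hr1 : (0:ℝ) < 1 + r := by linarith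
  have hL0 : 0 < L := by rw [hL]; exact Real.log_pos (by linarith)
  have hinv : Tendsto (fun d : ℕ => ((d:ℝ))⁻¹) atTop (nhds 0) :=
    tendsto_inv_atTop_zero.comp tendsto_natCast_atTop_atTop
  set t : ℕ → ℝ := fun d => (L + s*c/(d:ℝ))/(d:ℝ) with ht_def
  -- d * t d → L
  have hnum : Tendsto (fun d : ℕ => L + s*c/(d:ℝ)) atTop (nhds L) := by
    have h1 : Tendsto (fun d : ℕ => L + s*c*((d:ℝ))⁻¹) atTop (nhds (L + s*c*0)) :=
      tendsto_const_nhds.add (tendsto_const_nhds.mul hinv)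
    rw [mul_zero, add_zero] at h1
    apply h1.congr
    intro d
    rw [div_eq_mul_inv]
  have htd : Tendsto (fun d : ℕ => (d:ℝ) * t d) atTop (nhds L) := by
    apply hnum.congr'
    filter_upwards [eventually_gt_atTop 0] with d hd
    have hd0 : (d:ℝ) ≠ 0 := Nat.cast_ne_zero.mpr hd.ne'
    rw [ht_def]
    field_simp
  have ht0 : Tendsto t atTop (nhds 0) := by
    have h2 := htd.mul hinv
    rw [mul_zero] at h2
    apply h2.congr'
    filter_upwards [eventually_gt_atTop 0] with d hd
    have hd0 : (d:ℝ) ≠ 0 := Nat.cast_ne_zero.mpr hd.ne'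
    field_simp
  have ht_ev : ∀ᶠ d : ℕ in atTop, 0 < t d ∧ t d ≤ 1/2 := by
    have hpos : ∀ᶠ d : ℕ in atTop, 0 < L + s*c/(d:ℝ) :=
      hnum.eventually_const_lt hL0 |>.mono (fun d hd => by linarith [hd])
    have hup : ∀ᶠ d : ℕ in atTop, t d < 1/2 := ht0.eventually_lt_const (by norm_num)
    filter_upwards [hpos, hup, eventually_gt_atTop 0] with d h1 h2 h3
    have hd0 : (0:ℝ) < (d:ℝ) := by exact_mod_cast h3
    exact ⟨div_pos h1 hd0, h2.le⟩
  -- limit A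
  have hA : Tendsto (fun d : ℕ => (d:ℝ) * ((d:ℝ) * Real.log (Ft (t d)) - L)) atTop
      (nhds (s*c - L^2/6)) := by
    have hfun : ∀ᶠ d : ℕ in atTop,
        (d:ℝ)^2 * (Real.log (Ft (t d)) - t d + (t d)^2/6) + s*c - ((d:ℝ) * t d)^2/6
          = (d:ℝ) * ((d:ℝ) * Real.log (Ft (t d)) - L) := by
      filter_upwards [eventually_gt_atTop 0] with d hd
      have hd0 : (d:ℝ) ≠ 0 := Nat.cast_ne_zero.mpr hd.ne'
      have htd_eq : t d = (L + s*c/(d:ℝ))/(d:ℝ) := rfl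
      rw [htd_eq]
      field_simp
      ring
    have hterm1 : Tendsto (fun d : ℕ => (d:ℝ)^2 * (Real.log (Ft (t d)) - t d + (t d)^2/6))
        atTop (nhds 0) := by
      apply squeeze_zero_norm' (a := fun d : ℕ => 8 * |(d:ℝ) * t d|^3 * ((d:ℝ))⁻¹)
      · filter_upwards [ht_ev, eventually_gt_atTop 0] with d hd12 h3
        obtain ⟨h1, h2⟩ := hd12
        have hd0 : (0:ℝ) < (d:ℝ) := by exact_mod_cast h3
        have hbd : |Real.log (Ft (t d)) - t d + (t d)^2/6| ≤ 8 * (t d)^3 := by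
          simpa [Ft] using logF_taylor h1 h2
        have he1 : ‖(d:ℝ)^2 * (Real.log (Ft (t d)) - t d + (t d)^2/6)‖
            = (d:ℝ)^2 * |Real.log (Ft (t d)) - t d + (t d)^2/6| := by
          rw [Real.norm_eq_abs, abs_mul, abs_pow, Nat.abs_cast]
        rw [he1]
        have h8 : (d:ℝ)^2 * |Real.log (Ft (t d)) - t d + (t d)^2/6|
            ≤ (d:ℝ)^2 * (8 * (t d)^3) := mul_le_mul_of_nonneg_left hbd (by positivity)
        refine h8.trans (le_of_eq ?_)
        rw [abs_of_pos (mul_pos hd0 h1)]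
        field_simp
      · have h9 : Tendsto (fun d : ℕ => 8 * |(d:ℝ) * t d|^3 * ((d:ℝ))⁻¹) atTop
            (nhds (8 * |L|^3 * 0)) := ((htd.abs.pow 3).const_mul 8).mul hinv
        simpa using h9
    have hterm3 : Tendsto (fun d : ℕ => ((d:ℝ) * t d)^2/6) atTop (nhds (L^2/6)) :=
      (htd.pow 2).div_const 6
    have hsum := (hterm1.add (tendsto_const_nhds (x := s*c))).sub hterm3
    rw [zero_add] at hsum
    exact hsum.congr' hfun
  -- limit B
  have hB : Tendsto (fun d : ℕ => (d:ℝ) * ((d:ℝ) * Real.log (Gt (t d)))) atTop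
      (nhds (-(L^2/6))) := by
    have hfun : ∀ᶠ d : ℕ in atTop,
        (d:ℝ)^2 * (Real.log (Gt (t d)) + (t d)^2/6) - ((d:ℝ) * t d)^2/6
          = (d:ℝ) * ((d:ℝ) * Real.log (Gt (t d))) := by
      filter_upwards [eventually_gt_atTop 0] with d hd
      ring
    have hterm1 : Tendsto (fun d : ℕ => (d:ℝ)^2 * (Real.log (Gt (t d)) + (t d)^2/6))
        atTop (nhds 0) := by
      apply squeeze_zero_norm' (a := fun d : ℕ => 2 * |(d:ℝ) * t d|^3 * ((d:ℝ))⁻¹)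
      · filter_upwards [ht_ev, eventually_gt_atTop 0] with d hd12 h3
        obtain ⟨h1, h2⟩ := hd12
        have hd0 : (0:ℝ) < (d:ℝ) := by exact_mod_cast h3
        have hbd : |Real.log (Gt (t d)) + (t d)^2/6| ≤ 2 * (t d)^3 := by
          simpa [Gt] using logG_taylor h1 h2
        have he1 : ‖(d:ℝ)^2 * (Real.log (Gt (t d)) + (t d)^2/6)‖
            = (d:ℝ)^2 * |Real.log (Gt (t d)) + (t d)^2/6| := by
          rw [Real.norm_eq_abs, abs_mul, abs_pow, Nat.abs_cast]
        rw [he1]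
        have h8 : (d:ℝ)^2 * |Real.log (Gt (t d)) + (t d)^2/6|
            ≤ (d:ℝ)^2 * (2 * (t d)^3) := mul_le_mul_of_nonneg_left hbd (by positivity)
        refine h8.trans (le_of_eq ?_)
        rw [abs_of_pos (mul_pos hd0 h1)]
        field_simp
      · have h9 : Tendsto (fun d : ℕ => 2 * |(d:ℝ) * t d|^3 * ((d:ℝ))⁻¹) atTop
            (nhds (2 * |L|^3 * 0)) := ((htd.abs.pow 3).const_mul 2).mul hinv
        simpa using h9
    have hterm3 : Tendsto (fun d : ℕ => ((d:ℝ) * t d)^2/6) atTop (nhds (L^2/6)) :=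
      (htd.pow 2).div_const 6
    have hsum := hterm1.sub hterm3
    rw [zero_sub] at hsum
    exact hsum.congr' hfun
  have hexpA := exp_lim (u := fun d => (d:ℝ) * Real.log (Ft (t d)) - L) hA
  have hexpB := exp_lim (u := fun d => (d:ℝ) * Real.log (Gt (t d))) hB
  have hcomb := (hexpA.const_mul (1+r)).sub hexpB
  have hval : (1+r) * (s*c - L^2/6) - -(L^2/6) = (1+r)*c*(s-1) := by
    have h6 : (1+r)*c = r*L^2/6 := by
      rw [hc]; field_simp
    linear_combination h6
  rw [hval] at hcomb
  apply hcomb.congr'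
  filter_upwards [ht_ev, eventually_gt_atTop 0] with d hd12 h3
  obtain ⟨h1, h2⟩ := hd12
  have hd0 : (d:ℝ) ≠ 0 := by
    have : (0:ℝ) < (d:ℝ) := by exact_mod_cast h3
    exact this.ne'
  have hF0 : 0 < Ft (t d) := by
    have := F_pos h1 (by linarith : t d ≤ 1)
    simpa [Ft] using this
  have hG0 : 0 < Gt (t d) := div_pos (sin_pos' h1 (by linarith)) h1
  have hyt : π * ((L + s*c/(d:ℝ)) / (π * (d:ℝ))) = t d := by
    have htd_eq : t d = (L + s*c/(d:ℝ))/(d:ℝ) := rfl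
    rw [htd_eq]
    field_simp
  have hDexp : D d ((L + s*c/(d:ℝ)) / (π * (d:ℝ)))
      = Real.exp ((d:ℝ) * Real.log (Ft (t d))) - Real.exp ((d:ℝ) * Real.log (Gt (t d))) := by
    rw [Real.exp_nat_mul, Real.exp_nat_mul, Real.exp_log hF0, Real.exp_log hG0]
    simp only [D, hyt, Ft, Gt]
  rw [hDexp]
  have hexpL : Real.exp L = 1 + r := by rw [hL]; exact Real.exp_log hr1
  have hsplit : Real.exp ((d:ℝ) * Real.log (Ft (t d)))
      = Real.exp ((d:ℝ) * Real.log (Ft (t d)) - L) * (1+r) := by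
    rw [← hexpL, ← Real.exp_add]
    ring_nf
  rw [hsplit]
  ring

lemma y_mem (L c s : ℝ) (hL0 : 0 < L) :
    ∀ᶠ d : ℕ in atTop, ((L + s*c/(d:ℝ))/(π*(d:ℝ))) ∈ Ioo (0:ℝ) (1/4) := by
  have hinv : Tendsto (fun d : ℕ => ((d:ℝ))⁻¹) atTop (nhds 0) :=
    tendsto_inv_atTop_zero.comp tendsto_natCast_atTop_atTop
  have hnum : Tendsto (fun d : ℕ => L + s*c/(d:ℝ)) atTop (nhds L) := by
    have h1 : Tendsto (fun d : ℕ => L + s*c*((d:ℝ))⁻¹) atTop (nhds (L + s*c*0)) :=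
      tendsto_const_nhds.add (tendsto_const_nhds.mul hinv)
    rw [mul_zero, add_zero] at h1
    exact h1.congr (fun d => by rw [div_eq_mul_inv])
  have hdenom : Tendsto (fun d : ℕ => π * (d:ℝ)) atTop atTop :=
    Tendsto.const_mul_atTop Real.pi_pos tendsto_natCast_atTop_atTop
  have hy0 : Tendsto (fun d : ℕ => (L + s*c/(d:ℝ))/(π*(d:ℝ))) atTop (nhds 0) :=
    Tendsto.div_atTop hnum hdenom
  filter_upwards [hnum.eventually_const_lt hL0, hy0.eventually_lt_const (by norm_num : (0:ℝ) < 1/4),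
    eventually_gt_atTop 0] with d h1 h2 h3
  have hd0 : (0:ℝ) < (d:ℝ) := by exact_mod_cast h3
  exact ⟨div_pos h1 (by positivity), h2⟩

theorem stmt_19 (A B : ℝ) (hA : 0 < A) (hAB : A ≤ B) (x : ℕ → ℝ)
    (hx : ∀ d : ℕ, 1 ≤ d → x d ∈ Ioo (0 : ℝ) (1 / 4) ∧ D d (x d) = A / B) :
    Tendsto (fun d : ℕ =>
        (x d - Real.log (1 + A / B) / (π * d)) /
          ((Real.log (1 + A / B)) ^ 2 / (6 * π * (1 + B / A) * (d : ℝ) ^ 2)))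
      atTop (nhds 1) := by
  have hB0 : 0 < B := lt_of_lt_of_le hA hAB
  set r := A / B with hr_def
  have hr : 0 < r := div_pos hA hB0
  set L := Real.log (1 + r) with hL_def
  have hL0 : 0 < L := Real.log_pos (by simp only [lt_add_iff_pos_right]; exact hr)
  set c := r * L ^ 2 / (6 * (1 + r)) with hc_def
  have hc0 : 0 < c := div_pos (mul_pos hr (pow_pos hL0 2)) (by linarith)
  have hden : ∀ d : ℕ, 1 ≤ d →
      L ^ 2 / (6 * π * (1 + B / A) * (d:ℝ) ^ 2) = c / (π * (d:ℝ) ^ 2) := by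
    intro d hd
    have hd0 : (d:ℝ) ≠ 0 := Nat.cast_ne_zero.mpr (by omega)
    have hBA : 1 + B / A = (1 + r) / r := by
      rw [hr_def]; field_simp; ring
    rw [hBA, hc_def]
    field_simp
  -- comparison lemmas
  have hcomp_lt : ∀ s : ℝ, 1 < s → ∀ᶠ d : ℕ in atTop,
      x d < (L + s*c/(d:ℝ))/(π*(d:ℝ)) := by
    intro s hs
    have klim := key_lim r L c s hr hL_def hc_def
    have hpos : (0:ℝ) < (1 + r) * c * (s - 1) := by
      apply mul_pos (mul_pos (by linarith) hc0); linarith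
    filter_upwards [klim.eventually_const_lt hpos, y_mem L c s hL0,
      eventually_ge_atTop 1] with d h1 h2 h3
    by_contra hcon
    push_neg at hcon
    have hxmem := (hx d h3).1
    have hxval := (hx d h3).2
    have hmono := (D_strictMono d h3).monotoneOn
    have := hmono h2 hxmem hcon
    rw [hxval] at this
    have hd0 : (0:ℝ) < (d:ℝ) := by exact_mod_cast (by omega : 0 < d)
    nlinarith
  have hcomp_gt : ∀ s : ℝ, s < 1 → ∀ᶠ d : ℕ in atTop,
      (L + s*c/(d:ℝ))/(π*(d:ℝ)) < x d := by
    intro s hs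
    have klim := key_lim r L c s hr hL_def hc_def
    have hneg : (1 + r) * c * (s - 1) < 0 := by
      have : 0 < (1 + r) * c := mul_pos (by linarith) hc0
      nlinarith
    filter_upwards [klim.eventually_lt_const hneg, y_mem L c s hL0,
      eventually_ge_atTop 1] with d h1 h2 h3
    by_contra hcon
    push_neg at hcon
    have hxmem := (hx d h3).1
    have hxval := (hx d h3).2
    have hmono := (D_strictMono d h3).monotoneOn
    have := hmono hxmem h2 hcon
    rw [hxval] at this
    have hd0 : (0:ℝ) < (d:ℝ) := by exact_mod_cast (by omega : 0 < d)
    nlinarith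
  rw [tendsto_order]
  constructor
  · intro l hl
    have hs1 : (l+1)/2 < 1 := by linarith
    have hls : l < (l+1)/2 := by linarith
    filter_upwards [hcomp_gt ((l+1)/2) hs1, eventually_ge_atTop 1] with d h1 h3
    have hd0 : (0:ℝ) < (d:ℝ) := by exact_mod_cast (by omega : 0 < d)
    rw [hden d h3]
    have hdenpos : (0:ℝ) < c / (π * (d:ℝ)^2) := by positivity
    rw [lt_div_iff₀ hdenpos]
    have hysplit : (L + ((l+1)/2)*c/(d:ℝ))/(π*(d:ℝ))
        = L/(π*(d:ℝ)) + ((l+1)/2)*(c/(π*(d:ℝ)^2)) := by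
      field_simp
    rw [hysplit] at h1
    nlinarith [mul_pos Real.pi_pos (mul_pos hd0 hd0)]
  · intro u hu
    have hs1 : 1 < (u+1)/2 := by linarith
    have hus : (u+1)/2 < u := by linarith
    filter_upwards [hcomp_lt ((u+1)/2) hs1, eventually_ge_atTop 1] with d h1 h3
    have hd0 : (0:ℝ) < (d:ℝ) := by exact_mod_cast (by omega : 0 < d)
    rw [hden d h3]
    have hdenpos : (0:ℝ) < c / (π * (d:ℝ)^2) := by positivity
    rw [div_lt_iff₀ hdenpos]
    have hysplit : (L + ((u+1)/2)*c/(d:ℝ))/(π*(d:ℝ))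
        = L/(π*(d:ℝ)) + ((u+1)/2)*(c/(π*(d:ℝ)^2)) := by
      field_simp
    rw [hysplit] at h1
    nlinarith [mul_pos Real.pi_pos (mul_pos hd0 hd0)]
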